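/- Let n and m be natural numbers with 2m ≤ n, and let K be the subspace of real skew-symmetric n×n matrices spanned by {E_{2i−1,2i} − E_{2i,2i−1} : 1 ≤ i ≤ m} together with {E_{kl} − E_{lk} : 2m < k < l ≤ n}. Then for every real diagonal n×n matrix A, K is closed under the bracket ⁅X,Y⁆_A := X·A·Y − Y·A·X; that is, K is a Lie subalgebra of the Lie algebra g_λ for every bracket of the pencil. -/

import Mathlib

open Matrix

/-- The index `2i−1` (1-based), i.e. the first index of the `i`-th `2×2` block. -/
def idxA {n m : ℕ} (h : 2 * m ≤ n) (i : Fin m) : Fin n :=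
  ⟨2 * i.val, by have := i.isLt; omega⟩

/-- The index `2i` (1-based), i.e. the second index of the `i`-th `2×2` block. -/
def idxB {n m : ℕ} (h : 2 * m ≤ n) (i : Fin m) : Fin n :=
  ⟨2 * i.val + 1, by have := i.isLt; omega⟩

/-- The generating set of `K`: the matrices `E_{2i−1,2i} − E_{2i,2i−1}` for `1 ≤ i ≤ m`
together with `E_{kl} − E_{lk}` for `2m < k < l ≤ n`. -/
def genSetK {n m : ℕ} (h : 2 * m ≤ n) : Set (Matrix (Fin n) (Fin n) ℝ) :=
  {X | ∃ i : Fin m,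
      X = Matrix.single (idxA h i) (idxB h i) (1 : ℝ) -
        Matrix.single (idxB h i) (idxA h i) (1 : ℝ)} ∪
  {X | ∃ k l : Fin n, 2 * m ≤ k.val ∧ 2 * m ≤ l.val ∧ k.val < l.val ∧
      X = Matrix.single k l (1 : ℝ) - Matrix.single l k (1 : ℝ)}

namespace KAux

/-- The "class" of an index: the block number for block indices, `m` for tail indices. -/
def cls (m : ℕ) {n : ℕ} (i : Fin n) : ℕ := min (i.val / 2) m

/-- Skew generator. -/
def D {n : ℕ} (p q : Fin n) : Matrix (Fin n) (Fin n) ℝ :=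
  Matrix.single p q (1 : ℝ) - Matrix.single q p (1 : ℝ)

lemma D_apply {n : ℕ} (p q i j : Fin n) :
    D p q i j = (if p = i ∧ q = j then (1:ℝ) else 0) - (if q = i ∧ p = j then (1:ℝ) else 0) :=
  rfl

lemma D_neg {n : ℕ} (p q : Fin n) : D q p = -D p q := by
  simp [D]

lemma D_skew {n : ℕ} (p q i j : Fin n) : D p q j i = -D p q i j := by
  have e1 : (p = j ∧ q = i) = (q = i ∧ p = j) := propext and_comm
  have e2 : (q = j ∧ p = i) = (p = i ∧ q = j) := propext and_comm
  simp only [D_apply, e1, e2, neg_sub]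

/-- Every `D p q` with `p ≠ q` and matching classes lies in the span of the generators. -/
lemma D_mem {n m : ℕ} (h : 2 * m ≤ n) (p q : Fin n) (hpq : p ≠ q)
    (hc : cls m p = cls m q) : D p q ∈ Submodule.span ℝ (genSetK h) := by
  have key : ∀ p q : Fin n, p.val < q.val → cls m p = cls m q →
      D p q ∈ Submodule.span ℝ (genSetK h) := by
    intro p q hlt hc
    apply Submodule.subset_span
    simp only [cls] at hc
    by_cases hp : p.val / 2 < m
    · -- block case : cls p = p/2 < m, so q/2 = p/2, hence q = p+1, p even
      have hq2 : q.val / 2 = p.val / 2 := by omega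
      left
      refine ⟨⟨p.val / 2, hp⟩, ?_⟩
      have hAe : idxA h ⟨p.val / 2, hp⟩ = p := by
        apply Fin.ext; simp only [idxA]; omega
      have hBe : idxB h ⟨p.val / 2, hp⟩ = q := by
        apply Fin.ext; simp only [idxB]; omega
      rw [hAe, hBe]; rfl
    · -- tail case
      have hp2 : 2 * m ≤ p.val := by omega
      have hq2 : 2 * m ≤ q.val := by omega
      right
      exact ⟨p, q, hp2, hq2, hlt, rfl⟩
  rcases lt_trichotomy p.val q.val with hlt | heq | hgt
  · exact key p q hlt hc
  · exact absurd (Fin.ext heq) hpq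
  · rw [D_neg q p]
    exact neg_mem (key q p hgt hc.symm)

/-- The submodule of skew matrices supported on the block pattern. -/
def P (m n : ℕ) : Submodule ℝ (Matrix (Fin n) (Fin n) ℝ) where
  carrier := {X | (∀ i j, X j i = -X i j) ∧ ∀ i j, cls m i ≠ cls m j → X i j = 0}
  add_mem' := by
    rintro X Y ⟨hX1, hX2⟩ ⟨hY1, hY2⟩
    refine ⟨fun i j => ?_, fun i j hij => ?_⟩
    · simp only [Matrix.add_apply, hX1 i j, hY1 i j]; ring
    · simp only [Matrix.add_apply, hX2 i j hij, hY2 i j hij, add_zero]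
  zero_mem' := by simp
  smul_mem' := by
    rintro c X ⟨hX1, hX2⟩
    refine ⟨fun i j => ?_, fun i j hij => ?_⟩
    · simp only [Matrix.smul_apply, hX1 i j, smul_eq_mul]; ring
    · simp only [Matrix.smul_apply, hX2 i j hij, smul_zero]

lemma gen_subset_P {n m : ℕ} (h : 2 * m ≤ n) : genSetK h ⊆ (P m n : Set _) := by
  rintro X (⟨i, rfl⟩ | ⟨k, l, hk, hl, hkl, rfl⟩)
  · have hc : cls m (idxA h i) = cls m (idxB h i) := by
      have := i.isLt
      simp only [cls, idxA, idxB]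
      omega
    refine ⟨fun a b => D_skew _ _ _ _, fun a b hab => ?_⟩
    show D _ _ a b = 0
    rw [D_apply]
    have h1 : ¬(idxA h i = a ∧ idxB h i = b) := by
      rintro ⟨rfl, rfl⟩; exact hab hc
    have h2 : ¬(idxB h i = a ∧ idxA h i = b) := by
      rintro ⟨rfl, rfl⟩; exact hab hc.symm
    rw [if_neg h1, if_neg h2, sub_zero]
  · have hc : cls m k = cls m l := by simp only [cls]; omega
    refine ⟨fun a b => D_skew _ _ _ _, fun a b hab => ?_⟩
    show D _ _ a b = 0
    rw [D_apply]
    have h1 : ¬(k = a ∧ l = b) := by rintro ⟨rfl, rfl⟩; exact hab hc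
    have h2 : ¬(l = a ∧ k = b) := by rintro ⟨rfl, rfl⟩; exact hab hc.symm
    rw [if_neg h1, if_neg h2, sub_zero]

lemma P_subset_span {n m : ℕ} (h : 2 * m ≤ n) (X : Matrix (Fin n) (Fin n) ℝ)
    (hX : X ∈ P m n) : X ∈ Submodule.span ℝ (genSetK h) := by
  obtain ⟨hskew, hsupp⟩ := hX
  have h1 : ∑ p : Fin n, ∑ q : Fin n, X p q • Matrix.single p q (1:ℝ) = X := by
    conv_rhs => rw [Matrix.matrix_eq_sum_single X]
    refine Finset.sum_congr rfl fun p _ => Finset.sum_congr rfl fun q _ => ?_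
    rw [Matrix.smul_single, smul_eq_mul, mul_one]
  have h2 : ∑ p : Fin n, ∑ q : Fin n, X p q • Matrix.single q p (1:ℝ) = Xᵀ := by
    rw [Finset.sum_comm]
    conv_rhs => rw [Matrix.matrix_eq_sum_single Xᵀ]
    refine Finset.sum_congr rfl fun q _ => Finset.sum_congr rfl fun p _ => ?_
    rw [Matrix.smul_single, smul_eq_mul, mul_one, Matrix.transpose_apply]
  have hT : Xᵀ = -X := by
    ext i j; rw [Matrix.transpose_apply, Matrix.neg_apply]; exact hskew i j
  have hXeq : X = (2⁻¹ : ℝ) • ∑ p : Fin n, ∑ q : Fin n, X p q • KAux.D p q := by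
    have hsum : ∑ p : Fin n, ∑ q : Fin n, X p q • KAux.D p q = X - Xᵀ := by
      simp only [KAux.D, smul_sub, Finset.sum_sub_distrib, h1, h2]
    rw [hsum, hT, sub_neg_eq_add]
    ext i j
    simp only [Matrix.smul_apply, Matrix.add_apply, smul_eq_mul]
    ring
  rw [hXeq]
  refine Submodule.smul_mem _ _ (Submodule.sum_mem _ fun p _ =>
    Submodule.sum_mem _ fun q _ => ?_)
  by_cases hz : X p q = 0
  · simp [hz]
  · refine Submodule.smul_mem _ _ (D_mem h p q ?_ ?_)
    · rintro rfl
      have := hskew p p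
      apply hz; linarith
    · by_contra hc
      exact hz (hsupp p q hc)

lemma A_symm {n : ℕ} {A : Matrix (Fin n) (Fin n) ℝ} (hA : A.IsDiag) (i j : Fin n) :
    A i j = A j i := by
  by_cases hij : i = j
  · subst hij; rfl
  · rw [hA hij, hA (Ne.symm hij)]

lemma prod_entry_zero {n m : ℕ} {A X Y : Matrix (Fin n) (Fin n) ℝ} (hA : A.IsDiag)
    (hXz : ∀ i j, cls m i ≠ cls m j → X i j = 0)
    (hYz : ∀ i j, cls m i ≠ cls m j → Y i j = 0)
    (i j : Fin n) (hij : cls m i ≠ cls m j) : (X * A * Y) i j = 0 := by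
  rw [Matrix.mul_apply]
  apply Finset.sum_eq_zero
  intro k _
  by_cases hik : cls m i = cls m k
  · rw [hYz k j (fun hc => hij (hik.trans hc)), mul_zero]
  · rw [Matrix.mul_apply, Finset.sum_eq_zero, zero_mul]
    intro l _
    by_cases hlk : l = k
    · subst hlk; rw [hXz i l hik, zero_mul]
    · rw [hA hlk, mul_zero]

end KAux

/-- For every real diagonal matrix `A`, the subspace `K` (the span of the generators
`E_{2i−1,2i} − E_{2i,2i−1}`, `1 ≤ i ≤ m`, and `E_{kl} − E_{lk}`, `2m < k < l ≤ n`)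
is closed under the pencil bracket `⁅X,Y⁆_A := X·A·Y − Y·A·X`; that is, `K` is a Lie
subalgebra of `g_λ` for every bracket of the pencil. -/
theorem K_subalgebra (n m : ℕ) (h : 2 * m ≤ n)
    (A : Matrix (Fin n) (Fin n) ℝ) (hA : A.IsDiag) :
    ∀ X ∈ Submodule.span ℝ (genSetK h), ∀ Y ∈ Submodule.span ℝ (genSetK h),
      X * A * Y - Y * A * X ∈ Submodule.span ℝ (genSetK h) := by
  intro X hX Y hY
  have hspanP : Submodule.span ℝ (genSetK h) ≤ KAux.P m n :=
    Submodule.span_le.mpr (KAux.gen_subset_P h)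
  obtain ⟨hXs, hXz⟩ := hspanP hX
  obtain ⟨hYs, hYz⟩ := hspanP hY
  apply KAux.P_subset_span h
  have hXT : Xᵀ = -X := by
    ext i j; rw [Matrix.transpose_apply, Matrix.neg_apply]; exact hXs i j
  have hYT : Yᵀ = -Y := by
    ext i j; rw [Matrix.transpose_apply, Matrix.neg_apply]; exact hYs i j
  have hAT : Aᵀ = A := by ext i j; exact KAux.A_symm hA j i
  have key : ∀ U V : Matrix (Fin n) (Fin n) ℝ, Uᵀ = -U → Vᵀ = -V →
      (U * A * V)ᵀ = V * A * U := by
    intro U V hU hV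
    rw [Matrix.transpose_mul, Matrix.transpose_mul, hU, hV, hAT]
    simp only [Matrix.neg_mul, Matrix.mul_neg, neg_neg, Matrix.mul_assoc]
  constructor
  · intro i j
    have h1 : (X * A * Y) j i = (Y * A * X) i j := by
      rw [← key X Y hXT hYT]; rfl
    have h2 : (Y * A * X) j i = (X * A * Y) i j := by
      rw [← key Y X hYT hXT]; rfl
    simp only [Matrix.sub_apply, h1, h2]
    ring
  · intro i j hij
    simp only [Matrix.sub_apply,
      KAux.prod_entry_zero hA hXz hYz i j hij,
      KAux.prod_entry_zero hA hYz hXz i j hij, sub_zero]
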